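/- Let d ≥ 3 and let G be a d-regular graph on exactly 2d vertices. Then every edge of G is contained in a triangle of G or in an induced 4-cycle of G. -/
import Mathlib


open SimpleGraph

/-- A Δ⁺-switch: five distinct vertices `v w x y z` with `vx, vw, xy, wz` edges
and `xw, yz` non-edges; the edges `xy, wz` are deleted and `xw, yz` are added. -/
def DeltaPlusSwitch {V : Type*} (G G' : SimpleGraph V) : Prop :=
  ∃ v w x y z : V, List.Pairwise (· ≠ ·) [v, w, x, y, z] ∧
    G.Adj v x ∧ G.Adj v w ∧ G.Adj x y ∧ G.Adj w z ∧ ¬ G.Adj x w ∧ ¬ G.Adj y z ∧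
    G'.edgeSet = (G.edgeSet \ {s(x, y), s(w, z)}) ∪ {s(x, w), s(y, z)}

/-- A Δ⁻-switch: five distinct vertices `v w x y z` with `vx, vw, xw, yz` edges
and `xy, wz` non-edges; the edges `xw, yz` are deleted and `xy, wz` are added. -/
def DeltaMinusSwitch {V : Type*} (G G' : SimpleGraph V) : Prop :=
  ∃ v w x y z : V, List.Pairwise (· ≠ ·) [v, w, x, y, z] ∧
    G.Adj v x ∧ G.Adj v w ∧ G.Adj x w ∧ G.Adj y z ∧ ¬ G.Adj x y ∧ ¬ G.Adj w z ∧
    G'.edgeSet = (G.edgeSet \ {s(x, w), s(y, z)}) ∪ {s(x, y), s(w, z)}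

/-- A Δ-switch is a Δ⁺-switch or a Δ⁻-switch. -/
def DeltaSwitch {V : Type*} (G G' : SimpleGraph V) : Prop :=
  DeltaPlusSwitch G G' ∨ DeltaMinusSwitch G G'

/-- Two graphs are Δ-switch equivalent if one is obtained from the other by a
finite (possibly empty) sequence of Δ-switches. -/
def DeltaEquiv {V : Type*} (G G' : SimpleGraph V) : Prop :=
  Relation.ReflTransGen DeltaSwitch G G'

/-- A graph is `d`-regular: every vertex has exactly `d` neighbours. -/
def RegularDeg {V : Type*} (G : SimpleGraph V) (d : ℕ) : Prop :=
  ∀ x : V, (G.neighborSet x).ncard = d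

/-- `a b c e` form an induced 4-cycle of `G`, containing the edge `ab`. -/
def IsInducedC4 {V : Type*} (G : SimpleGraph V) (a b c e : V) : Prop :=
  List.Pairwise (· ≠ ·) [a, b, c, e] ∧
    G.Adj a b ∧ G.Adj b c ∧ G.Adj c e ∧ G.Adj e a ∧ ¬ G.Adj a c ∧ ¬ G.Adj b e

/-- If `d ≥ 3` and `G` is `d`-regular on exactly `2d` vertices, then every edge of
`G` lies in a triangle or in an induced 4-cycle. -/
theorem edge_in_triangle_or_inducedC4_card_two_d {V : Type*} [Fintype V] {d : ℕ}
    (hd : 3 ≤ d) (G : SimpleGraph V) (hcard : Fintype.card V = 2 * d)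
    (hreg : RegularDeg G d) :
    ∀ a b : V, G.Adj a b →
      (∃ c : V, G.Adj a c ∧ G.Adj b c) ∨ (∃ c e : V, IsInducedC4 G a b c e) := by
  classical
  intro a b hab
  by_contra hcon
  push_neg at hcon
  obtain ⟨hno3, hno4⟩ := hcon
  have hab' : a ≠ b := hab.ne
  set A := G.neighborSet a \ {b} with hA
  set B := G.neighborSet b \ {a} with hB
  have hAfin : A.Finite := Set.toFinite _
  have hBfin : B.Finite := Set.toFinite _
  have hbNa : b ∈ G.neighborSet a := hab
  have haNb : a ∈ G.neighborSet b := hab.symm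
  have hAcard : A.ncard = d - 1 := by
    rw [hA, Set.ncard_diff_singleton_of_mem hbNa, hreg a]
  have hBcard : B.ncard = d - 1 := by
    rw [hB, Set.ncard_diff_singleton_of_mem haNb, hreg b]
  have hAB : Disjoint A B := by
    rw [Set.disjoint_left]
    rintro x ⟨hxa, _⟩ ⟨hxb, _⟩
    exact hno3 x hxa hxb
  have haA : a ∉ A := fun h => G.irrefl h.1
  have haB : a ∉ B := fun h => h.2 rfl
  have hbA : b ∉ A := fun h => h.2 rfl
  have hbB : b ∉ B := fun h => G.irrefl h.1
  -- the union is everything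
  have hU : insert a (insert b (A ∪ B)) = (Set.univ : Set V) := by
    apply Set.eq_of_subset_of_ncard_le (Set.subset_univ _) _ (Set.toFinite _)
    have h1 : (A ∪ B).ncard = (d - 1) + (d - 1) := by
      rw [Set.ncard_union_eq hAB hAfin hBfin, hAcard, hBcard]
    have h2 : (insert b (A ∪ B)).ncard = (d - 1) + (d - 1) + 1 := by
      rw [Set.ncard_insert_of_notMem (by simp [hbA, hbB]) (Set.toFinite _), h1]
    have h3 : (insert a (insert b (A ∪ B))).ncard = (d - 1) + (d - 1) + 1 + 1 := by
      rw [Set.ncard_insert_of_notMem (by simp [haA, haB, hab']) (Set.toFinite _), h2]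
    rw [h3, Set.ncard_univ, Nat.card_eq_fintype_card, hcard]
    omega
  -- pick e ∈ A
  have hAne : A.Nonempty := by
    rw [← Set.ncard_pos hAfin, hAcard]; omega
  obtain ⟨e, heA⟩ := hAne
  have heAa : G.Adj a e := heA.1
  have heb : e ≠ b := heA.2
  have hbe : ¬ G.Adj b e := fun h => hno3 e heAa h
  -- e has a neighbour in B
  have hc : ∃ c, c ∈ G.neighborSet e ∩ B := by
    by_contra hcc
    push_neg at hcc
    have hsub : G.neighborSet e ⊆ insert a (A \ {e}) := by
      intro x hx
      have hxU : x ∈ insert a (insert b (A ∪ B)) := hU ▸ Set.mem_univ x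
      have hxb : x ≠ b := fun h => hbe (h ▸ (hx : G.Adj e x)).symm
      have hxB : x ∉ B := fun h => hcc x ⟨hx, h⟩
      have hxe : x ≠ e := fun h => G.irrefl (h ▸ (hx : G.Adj e x))
      simp only [Set.mem_insert_iff, Set.mem_union] at hxU
      rcases hxU with rfl | rfl | h | h
      · exact Set.mem_insert _ _
      · exact absurd rfl hxb
      · exact Set.mem_insert_of_mem _ ⟨h, hxe⟩
      · exact absurd h hxB
    have hle := Set.ncard_le_ncard hsub (Set.toFinite _)
    have h1 : (A \ {e}).ncard = d - 1 - 1 := by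
      rw [Set.ncard_diff_singleton_of_mem heA, hAcard]
    have h2 : (insert a (A \ {e})).ncard = d - 1 - 1 + 1 := by
      rw [Set.ncard_insert_of_notMem (fun h => haA h.1) (Set.toFinite _), h1]
    rw [hreg e, h2] at hle
    omega
  obtain ⟨c, hcNe, hcB⟩ := hc
  have hec : G.Adj e c := hcNe
  have hbc : G.Adj b c := hcB.1
  have hca : c ≠ a := hcB.2
  have hac : ¬ G.Adj a c := fun h => hno3 c h hbc
  refine hno4 c e ⟨?_, hab, hbc, hec.symm, heAa.symm, hac, hbe⟩
  have h1 : a ≠ e := heAa.ne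
  have h3 : c ≠ e := hec.symm.ne
  have h4 : a ≠ c := Ne.symm hca
  have h5 : b ≠ e := Ne.symm heb
  simp [List.pairwise_cons, hab', h1, hbc.ne, h3, h4, h5]
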